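/- Let Ω ⊆ ℝ^n be a nonempty open set, q > 1, and let f : ℝ^n → ℝ be a C¹ function together with constants a, b > 0 such that ‖∇f‖ ≤ a on Ω and such that for every nonnegative smooth function φ : ℝ^n → ℝ with compact support contained in Ω one has -∫_Ω ‖∇f‖^{q-2} ⟨∇f, ∇φ⟩ dx ≥ b ∫_Ω φ dx. Then for every p > 1 and every smooth function v : ℝ^n → ℝ with compact support contained in Ω one has (b^p / (p^p a^{p(q-1)})) ∫_Ω |v|^p dx ≤ ∫_Ω ‖∇v‖^p dx. -/

import Mathlib

open MeasureTheory Real RealInnerProductSpace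

section AuxLemmas

variable {F : Type*} [NormedAddCommGroup F] [InnerProductSpace ℝ F] [CompleteSpace F]

lemma my_gradient_comp {v : F → ℝ} {h : ℝ → ℝ} {h' : ℝ} {x : F}
    (hv : DifferentiableAt ℝ v x) (hh : HasDerivAt h h' (v x)) :
    gradient (fun y => h (v y)) x = h' • gradient v x := by
  have H : HasFDerivAt (fun y => h (v y)) (h' • fderiv ℝ v x) x := by
    exact hh.comp_hasFDerivAt x hv.hasFDerivAt
  show (InnerProductSpace.toDual ℝ F).symm (fderiv ℝ (fun y => h (v y)) x) = _
  rw [H.fderiv, LinearIsometryEquiv.map_smul]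
  rfl

lemma my_gradient_zero {v : F → ℝ} {x : F} (hx : x ∉ tsupport v) :
    gradient v x = 0 := by
  have h0 : v =ᶠ[nhds x] (fun _ => (0:ℝ)) := by
    filter_upwards [(isClosed_tsupport v).isOpen_compl.mem_nhds hx] with y hy
    exact image_eq_zero_of_notMem_tsupport hy
  have hfd : fderiv ℝ v x = 0 := by
    rw [h0.fderiv_eq]; exact fderiv_const_apply 0
  show (InnerProductSpace.toDual ℝ F).symm (fderiv ℝ v x) = 0
  rw [hfd, map_zero]

lemma my_continuous_gradient {f : F → ℝ} (hf : ContDiff ℝ 1 f) :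
    Continuous (gradient f) := by
  show Continuous fun x => (InnerProductSpace.toDual ℝ F).symm (fderiv ℝ f x)
  exact (InnerProductSpace.toDual ℝ F).symm.continuous.comp (hf.continuous_fderiv one_ne_zero)

lemma my_young {p s A Y : ℝ} (hp : 1 < p) (hs : 0 < s) (hA : 0 ≤ A) (hY : 0 ≤ Y) :
    p * (A * Y) ≤ (p - 1) * s * A ^ (p / (p - 1)) + s ^ (1 - p) * Y ^ p := by
  have hp0 : (0:ℝ) < p := lt_trans one_pos hp
  have hp1 : (0:ℝ) < p - 1 := sub_pos.2 hp
  set c : ℝ := (p - 1) / p with hc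
  have hpq : (p / (p - 1)).HolderConjugate p :=
    ((Real.holderConjugate_iff_eq_conjExponent hp).mpr rfl).symm
  have hY2 := Real.young_inequality_of_nonneg
      (mul_nonneg (Real.rpow_nonneg hs.le c) hA)
      (mul_nonneg (Real.rpow_nonneg hs.le (-c)) hY) hpq
  have e1 : (s ^ c * A) * (s ^ (-c) * Y) = A * Y := by
    rw [mul_mul_mul_comm, ← Real.rpow_add hs, add_neg_cancel, Real.rpow_zero, one_mul]
  have hc1 : c * (p / (p - 1)) = 1 := by rw [hc]; field_simp
  have hc2 : -c * p = 1 - p := by rw [hc]; field_simp; ring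
  have e2 : (s ^ c * A) ^ (p / (p - 1)) = s * A ^ (p / (p - 1)) := by
    rw [Real.mul_rpow (Real.rpow_nonneg hs.le c) hA, ← Real.rpow_mul hs.le, hc1, Real.rpow_one]
  have e3 : (s ^ (-c) * Y) ^ p = s ^ (1 - p) * Y ^ p := by
    rw [Real.mul_rpow (Real.rpow_nonneg hs.le (-c)) hY, ← Real.rpow_mul hs.le, hc2]
  rw [e1, e2, e3] at hY2
  have := mul_le_mul_of_nonneg_left hY2 hp0.le
  calc p * (A * Y) ≤ p * (s * A ^ (p / (p - 1)) / (p / (p - 1)) + s ^ (1 - p) * Y ^ p / p) := this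
    _ = (p - 1) * s * A ^ (p / (p - 1)) + s ^ (1 - p) * Y ^ p := by
        field_simp

lemma my_sq_rpow {t : ℝ} (ht : 0 ≤ t) (r : ℝ) : (t ^ 2) ^ (r / 2) = t ^ r := by
  rw [← Real.rpow_natCast t 2, ← Real.rpow_mul ht]
  congr 1
  push_cast
  ring

lemma my_rpow_mul_self {q : ℝ} (hq : 1 < q) {c : ℝ} (hc : 0 ≤ c) :
    c ^ (q - 2) * c = c ^ (q - 1) := by
  rcases hc.eq_or_lt with h | h
  · rw [← h, mul_zero, Real.zero_rpow (by intro h'; linarith [sub_eq_zero.mp h'] : q - 1 ≠ 0)]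
  · calc c ^ (q - 2) * c = c ^ (q - 2) * c ^ (1:ℝ) := by rw [Real.rpow_one]
      _ = c ^ (q - 2 + 1) := (Real.rpow_add h _ _).symm
      _ = c ^ (q - 1) := by ring_nf

end AuxLemmas

set_option maxHeartbeats 1000000

/-- Theorem 2.2: if `|∇f| ≤ a` on `Ω` and `Δ_q f ≥ b` in the weak sense, then
`λ_{1,p}(Ω) ≥ b^p / (p^p a^{p(q-1)})` for every `p > 1`. -/
theorem eigenvalue_lower_bound_gradient_bounded {n : ℕ}
    (Ω : Set (EuclideanSpace ℝ (Fin n))) (hne : Ω.Nonempty) (hΩ : IsOpen Ω)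
    (q : ℝ) (hq : 1 < q)
    (f : EuclideanSpace ℝ (Fin n) → ℝ) (hf : ContDiff ℝ 1 f)
    (a b : ℝ) (ha : 0 < a) (hb : 0 < b)
    (hgrad : ∀ x ∈ Ω, ‖gradient f x‖ ≤ a)
    (hdiv : ∀ φ : EuclideanSpace ℝ (Fin n) → ℝ, ContDiff ℝ (⊤ : ℕ∞) φ →
      HasCompactSupport φ → tsupport φ ⊆ Ω → (∀ x, 0 ≤ φ x) →
      b * ∫ x in Ω, φ x ≤
        -∫ x in Ω, ‖gradient f x‖ ^ (q - 2) * ⟪gradient f x, gradient φ x⟫) :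
    ∀ p : ℝ, 1 < p →
      ∀ v : EuclideanSpace ℝ (Fin n) → ℝ, ContDiff ℝ (⊤ : ℕ∞) v →
        HasCompactSupport v → tsupport v ⊆ Ω →
        b ^ p / (p ^ p * a ^ (p * (q - 1))) * ∫ x in Ω, |v x| ^ p ≤
          ∫ x in Ω, ‖gradient v x‖ ^ p := by
  intro p hp v hv hvK hvΩ
  have hp0 : (0:ℝ) < p := lt_trans one_pos hp
  have hp1 : (0:ℝ) < p - 1 := sub_pos.2 hp
  set K : Set (EuclideanSpace ℝ (Fin n)) := tsupport v with hKdef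
  have hK : IsCompact K := hvK
  have hKΩ : K ⊆ Ω := hvΩ
  set μK : ℝ := (volume K).toReal with hμKdef
  have hμK0 : (0:ℝ) ≤ μK := ENNReal.toReal_nonneg
  have hαpos : (0:ℝ) < a ^ (q - 1) := Real.rpow_pos_of_pos ha _
  set α : ℝ := a ^ (q - 1) with hαdef
  set s : ℝ := b / (p * α) with hsdef
  have hs : 0 < s := div_pos hb (mul_pos hp0 hαpos)
  set C2 : ℝ := α * s ^ (1 - p) with hC2def
  have hC2 : 0 < C2 := mul_pos hαpos (Real.rpow_pos_of_pos hs _)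
  set Iv : ℝ := ∫ x in Ω, |v x| ^ p with hIvdef
  set Igv : ℝ := ∫ x in Ω, ‖gradient v x‖ ^ p with hIgvdef
  -- continuity and basic facts
  have hvc : Continuous v := hv.continuous
  have hgv : Continuous (gradient v) := my_continuous_gradient (hv.of_le (by exact_mod_cast le_top))
  have hgf : Continuous (gradient f) := my_continuous_gradient hf
  have hgv0 : ∀ x, x ∉ K → gradient v x = 0 := fun x hx => my_gradient_zero hx
  -- integrability of the fixed integrands
  have hIvp : Integrable (fun x => |v x| ^ p) :=
    (hvc.abs.rpow_const fun x => Or.inr hp0.le).integrable_of_hasCompactSupport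
      (HasCompactSupport.intro hK fun x hx => by
        rw [image_eq_zero_of_notMem_tsupport hx, abs_zero, Real.zero_rpow hp0.ne'])
  have hIgvp : Integrable (fun x => ‖gradient v x‖ ^ p) :=
    (hgv.norm.rpow_const fun x => Or.inr hp0.le).integrable_of_hasCompactSupport
      (HasCompactSupport.intro hK fun x hx => by
        rw [hgv0 x hx, norm_zero, Real.zero_rpow hp0.ne'])
  -- the main estimate, for every ε > 0
  have main : ∀ ε : ℝ, 0 < ε → b / p * Iv ≤ b * (ε ^ p * μK) + C2 * Igv := by
    intro ε hε
    have hbase : ∀ x, (0:ℝ) < v x ^ 2 + ε ^ 2 := fun x => by positivity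
    set φ : EuclideanSpace ℝ (Fin n) → ℝ := fun x => (v x ^ 2 + ε ^ 2) ^ (p / 2) - ε ^ p
      with hφdef
    have hφsm : ContDiff ℝ (⊤ : ℕ∞) φ := by
      apply ContDiff.sub _ contDiff_const
      exact ContDiff.rpow_const_of_ne ((hv.pow 2).add contDiff_const) (fun x => (hbase x).ne')
    have hφ0 : ∀ x, x ∉ K → φ x = 0 := by
      intro x hx
      have hvx : v x = 0 := image_eq_zero_of_notMem_tsupport hx
      show (v x ^ 2 + ε ^ 2) ^ (p / 2) - ε ^ p = 0
      rw [hvx]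
      norm_num [my_sq_rpow hε.le p]
    have hφK : HasCompactSupport φ := HasCompactSupport.intro hK hφ0
    have hφΩ : tsupport φ ⊆ Ω := by
      refine (closure_minimal ?_ (isClosed_tsupport v)).trans hKΩ
      intro x hx
      by_contra hxK
      exact hx (hφ0 x hxK)
    have hφnn : ∀ x, 0 ≤ φ x := by
      intro x
      have h1 : ε ^ p ≤ (v x ^ 2 + ε ^ 2) ^ (p / 2) := by
        rw [← my_sq_rpow hε.le p]
        exact Real.rpow_le_rpow (by positivity) (by nlinarith [sq_nonneg (v x)]) (by positivity)
      have h2 : (0:ℝ) ≤ (v x ^ 2 + ε ^ 2) ^ (p / 2) - ε ^ p := sub_nonneg.2 h1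
      exact h2
    have hφgrad : ∀ x, gradient φ x
        = (2 * v x * (p / 2) * (v x ^ 2 + ε ^ 2) ^ (p / 2 - 1)) • gradient v x := by
      intro x
      have h1 : HasDerivAt (fun t : ℝ => t ^ 2 + ε ^ 2) (2 * v x) (v x) := by
        simpa using (hasDerivAt_pow 2 (v x)).add_const (ε ^ 2)
      have h2 : HasDerivAt (fun t : ℝ => (t ^ 2 + ε ^ 2) ^ (p / 2) - ε ^ p)
          (2 * v x * (p / 2) * (v x ^ 2 + ε ^ 2) ^ (p / 2 - 1)) (v x) :=
        (h1.rpow_const (Or.inl (hbase x).ne')).sub_const _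
      exact my_gradient_comp (hv.differentiable (by simp) x) h2
    have hgφ0 : ∀ x, x ∉ K → gradient φ x = 0 := fun x hx => by
      rw [hφgrad x, hgv0 x hx, smul_zero]
    have hφcont : Continuous φ := hφsm.continuous
    have hgφ : Continuous (gradient φ) :=
      my_continuous_gradient (hφsm.of_le (by exact_mod_cast le_top))
    have hIφ : IntegrableOn φ Ω := (hφcont.integrable_of_hasCompactSupport hφK).integrableOn
    have hIg2 : IntegrableOn (fun x => α * ‖gradient φ x‖) Ω :=
      ((continuous_const.mul hgφ.norm).integrable_of_hasCompactSupport
        (HasCompactSupport.intro hK fun x hx => by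
          show α * ‖gradient φ x‖ = 0
          rw [hgφ0 x hx, norm_zero, mul_zero])).integrableOn
    have hIind : Integrable (K.indicator fun _ => ε ^ p) :=
      (integrable_indicator_iff hK.measurableSet).2
        (integrableOn_const hK.measure_lt_top.ne)
    have hindint : ∫ x in Ω, K.indicator (fun _ => ε ^ p) x = ε ^ p * μK := by
      rw [setIntegral_indicator hK.measurableSet, setIntegral_const,
        Set.inter_eq_self_of_subset_right hKΩ, smul_eq_mul, hμKdef, measureReal_def]
      ring
    have hbound : ∀ x ∈ Ω,
        |‖gradient f x‖ ^ (q - 2) * ⟪gradient f x, gradient φ x⟫| ≤ α * ‖gradient φ x‖ := by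
      intro x hx
      rw [abs_mul, abs_of_nonneg (Real.rpow_nonneg (norm_nonneg _) _)]
      calc ‖gradient f x‖ ^ (q - 2) * |⟪gradient f x, gradient φ x⟫|
          ≤ ‖gradient f x‖ ^ (q - 2) * (‖gradient f x‖ * ‖gradient φ x‖) :=
            mul_le_mul_of_nonneg_left (abs_real_inner_le_norm _ _)
              (Real.rpow_nonneg (norm_nonneg _) _)
        _ = (‖gradient f x‖ ^ (q - 2) * ‖gradient f x‖) * ‖gradient φ x‖ := by ring
        _ = ‖gradient f x‖ ^ (q - 1) * ‖gradient φ x‖ := by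
            rw [my_rpow_mul_self hq (norm_nonneg _)]
        _ ≤ α * ‖gradient φ x‖ := by
            apply mul_le_mul_of_nonneg_right _ (norm_nonneg _)
            rw [hαdef]
            exact Real.rpow_le_rpow (norm_nonneg _) (hgrad x hx) (by linarith)
    have hmeas : AEStronglyMeasurable
        (fun x => -(‖gradient f x‖ ^ (q - 2) * ⟪gradient f x, gradient φ x⟫))
        (volume.restrict Ω) := by
      apply AEStronglyMeasurable.neg
      apply AEStronglyMeasurable.mul
      · exact (hgf.norm.measurable.pow measurable_const).aestronglyMeasurable
      · exact (hgf.inner hgφ).aestronglyMeasurable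
    have hIg1 : IntegrableOn
        (fun x => -(‖gradient f x‖ ^ (q - 2) * ⟪gradient f x, gradient φ x⟫)) Ω := by
      apply Integrable.mono' hIg2 hmeas
      rw [ae_restrict_iff' hΩ.measurableSet]
      exact Filter.Eventually.of_forall fun x hx => by
        rw [norm_neg, Real.norm_eq_abs]
        exact hbound x hx
    have step1 : b * ∫ x in Ω, φ x
        ≤ ∫ x in Ω, -(‖gradient f x‖ ^ (q - 2) * ⟪gradient f x, gradient φ x⟫) := by
      have h := hdiv φ hφsm hφK hφΩ hφnn
      rwa [← integral_neg] at h
    have step2 : ∫ x in Ω, -(‖gradient f x‖ ^ (q - 2) * ⟪gradient f x, gradient φ x⟫)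
        ≤ ∫ x in Ω, α * ‖gradient φ x‖ := by
      apply setIntegral_mono_on hIg1 hIg2 hΩ.measurableSet
      intro x hx
      exact (neg_le_abs _).trans (hbound x hx)
    have hA0 : ∀ x, (0:ℝ) ≤ (v x ^ 2 + ε ^ 2) ^ ((p - 1) / 2) :=
      fun x => Real.rpow_nonneg (hbase x).le _
    have hApow : ∀ x, ((v x ^ 2 + ε ^ 2) ^ ((p - 1) / 2)) ^ (p / (p - 1))
        = (v x ^ 2 + ε ^ 2) ^ (p / 2) := by
      intro x
      rw [← Real.rpow_mul (hbase x).le]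
      congr 1
      field_simp [hp1.ne']
    have hφnorm : ∀ x, ‖gradient φ x‖
        ≤ p * ((v x ^ 2 + ε ^ 2) ^ ((p - 1) / 2) * ‖gradient v x‖) := by
      intro x
      rw [hφgrad x, norm_smul, Real.norm_eq_abs]
      have habs : |2 * v x * (p / 2) * (v x ^ 2 + ε ^ 2) ^ (p / 2 - 1)|
          ≤ p * (v x ^ 2 + ε ^ 2) ^ ((p - 1) / 2) := by
        rw [abs_mul, abs_of_nonneg (Real.rpow_nonneg (hbase x).le _)]
        have h1 : |2 * v x * (p / 2)| = p * |v x| := by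
          rw [abs_mul, abs_mul, abs_of_nonneg (by positivity : (0:ℝ) ≤ p / 2),
            abs_of_nonneg (by norm_num : (0:ℝ) ≤ (2:ℝ))]
          ring
        rw [h1]
        have h2 : |v x| ≤ (v x ^ 2 + ε ^ 2) ^ ((1:ℝ) / 2) := by
          calc |v x| = (|v x| ^ 2) ^ ((1:ℝ) / 2) := by
                rw [my_sq_rpow (abs_nonneg _) 1, Real.rpow_one]
            _ ≤ (v x ^ 2 + ε ^ 2) ^ ((1:ℝ) / 2) := by
                apply Real.rpow_le_rpow (by positivity) _ (by norm_num)
                rw [sq_abs]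
                nlinarith [sq_nonneg ε]
        calc p * |v x| * (v x ^ 2 + ε ^ 2) ^ (p / 2 - 1)
            ≤ p * (v x ^ 2 + ε ^ 2) ^ ((1:ℝ) / 2) * (v x ^ 2 + ε ^ 2) ^ (p / 2 - 1) := by
              apply mul_le_mul_of_nonneg_right _ (Real.rpow_nonneg (hbase x).le _)
              exact mul_le_mul_of_nonneg_left h2 hp0.le
          _ = p * (v x ^ 2 + ε ^ 2) ^ ((p - 1) / 2) := by
              rw [mul_assoc, ← Real.rpow_add (hbase x),
                show (1:ℝ) / 2 + (p / 2 - 1) = (p - 1) / 2 by ring]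
      calc |2 * v x * (p / 2) * (v x ^ 2 + ε ^ 2) ^ (p / 2 - 1)| * ‖gradient v x‖
          ≤ p * (v x ^ 2 + ε ^ 2) ^ ((p - 1) / 2) * ‖gradient v x‖ :=
            mul_le_mul_of_nonneg_right habs (norm_nonneg _)
        _ = p * ((v x ^ 2 + ε ^ 2) ^ ((p - 1) / 2) * ‖gradient v x‖) := mul_assoc _ _ _
    have pw3 : ∀ x ∈ Ω, α * ‖gradient φ x‖
        ≤ (p - 1) * s * α * (φ x + K.indicator (fun _ => ε ^ p) x)
          + α * s ^ (1 - p) * ‖gradient v x‖ ^ p := by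
      intro x _
      by_cases hxK : x ∈ K
      · rw [Set.indicator_of_mem hxK]
        have hsum : φ x + ε ^ p = (v x ^ 2 + ε ^ 2) ^ (p / 2) := by
          show (v x ^ 2 + ε ^ 2) ^ (p / 2) - ε ^ p + ε ^ p = _
          ring
        calc α * ‖gradient φ x‖
            ≤ α * (p * ((v x ^ 2 + ε ^ 2) ^ ((p - 1) / 2) * ‖gradient v x‖)) :=
              mul_le_mul_of_nonneg_left (hφnorm x) hαpos.le
          _ ≤ α * ((p - 1) * s * ((v x ^ 2 + ε ^ 2) ^ ((p - 1) / 2)) ^ (p / (p - 1))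
                + s ^ (1 - p) * ‖gradient v x‖ ^ p) :=
              mul_le_mul_of_nonneg_left (my_young hp hs (hA0 x) (norm_nonneg _)) hαpos.le
          _ = (p - 1) * s * α * (φ x + ε ^ p) + α * s ^ (1 - p) * ‖gradient v x‖ ^ p := by
              rw [hApow x, hsum]
              ring
      · rw [Set.indicator_of_notMem hxK, hφ0 x hxK, hgφ0 x hxK, hgv0 x hxK]
        simp [Real.zero_rpow hp0.ne']
    have hIg3 : IntegrableOn (fun x => (p - 1) * s * α * (φ x + K.indicator (fun _ => ε ^ p) x)
        + α * s ^ (1 - p) * ‖gradient v x‖ ^ p) Ω :=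
      ((hIφ.add hIind.integrableOn).const_mul _).add ((hIgvp.integrableOn).const_mul _)
    have step3 : ∫ x in Ω, α * ‖gradient φ x‖
        ≤ ∫ x in Ω, ((p - 1) * s * α * (φ x + K.indicator (fun _ => ε ^ p) x)
          + α * s ^ (1 - p) * ‖gradient v x‖ ^ p) :=
      setIntegral_mono_on hIg2 hIg3 hΩ.measurableSet pw3
    have step4 : ∫ x in Ω, ((p - 1) * s * α * (φ x + K.indicator (fun _ => ε ^ p) x)
          + α * s ^ (1 - p) * ‖gradient v x‖ ^ p)
        = (p - 1) * s * α * ((∫ x in Ω, φ x) + ε ^ p * μK)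
          + α * s ^ (1 - p) * Igv := by
      have i1 : Integrable (fun x => φ x + K.indicator (fun _ => ε ^ p) x)
          (volume.restrict Ω) := hIφ.add hIind.integrableOn
      have i2 : Integrable (fun x => (p - 1) * s * α * (φ x + K.indicator (fun _ => ε ^ p) x))
          (volume.restrict Ω) := i1.const_mul _
      have i3 : Integrable (fun x => α * s ^ (1 - p) * ‖gradient v x‖ ^ p)
          (volume.restrict Ω) := (hIgvp.integrableOn).const_mul _
      rw [integral_add i2 i3, integral_const_mul, integral_const_mul,
        integral_add hIφ hIind.integrableOn, hindint, hIgvdef]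
    have pwF : ∀ x ∈ Ω, |v x| ^ p - K.indicator (fun _ => ε ^ p) x ≤ φ x := by
      intro x _
      by_cases hxK : x ∈ K
      · rw [Set.indicator_of_mem hxK]
        have h1 : |v x| ^ p ≤ (v x ^ 2 + ε ^ 2) ^ (p / 2) := by
          rw [← my_sq_rpow (abs_nonneg (v x)) p]
          apply Real.rpow_le_rpow (by positivity) _ (by positivity)
          rw [sq_abs]
          nlinarith [sq_nonneg ε]
        have h2 : |v x| ^ p - ε ^ p ≤ (v x ^ 2 + ε ^ 2) ^ (p / 2) - ε ^ p := by linarith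
        exact h2
      · rw [Set.indicator_of_notMem hxK, image_eq_zero_of_notMem_tsupport hxK, hφ0 x hxK]
        simp [Real.zero_rpow hp0.ne']
    have stepF : Iv - ε ^ p * μK ≤ ∫ x in Ω, φ x := by
      have i4 : Integrable (fun x => |v x| ^ p - K.indicator (fun _ => ε ^ p) x)
          (volume.restrict Ω) := (hIvp.integrableOn).sub hIind.integrableOn
      have h := setIntegral_mono_on i4 hIφ hΩ.measurableSet pwF
      rwa [integral_sub hIvp.integrableOn hIind.integrableOn, hindint, ← hIvdef] at h
    set Jφ : ℝ := ∫ x in Ω, φ x with hJdef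
    have hchain : b * Jφ ≤ (p - 1) * s * α * (Jφ + ε ^ p * μK) + α * s ^ (1 - p) * Igv := by
      calc b * Jφ ≤ _ := step1
        _ ≤ _ := step2
        _ ≤ _ := step3
        _ = _ := step4
    have hbC1 : b - (p - 1) * s * α = b / p := by
      rw [hsdef]
      field_simp
      ring
    have hsum2 : b / p + (p - 1) * s * α = b := by
      rw [hsdef]
      field_simp
      ring
    have e1 : b / p * Jφ = b * Jφ - (p - 1) * s * α * Jφ := by
      rw [← sub_mul, hbC1]
    have m2 : b / p * Jφ ≤ (p - 1) * s * α * (ε ^ p * μK) + α * s ^ (1 - p) * Igv := by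
      have hexp : (p - 1) * s * α * (Jφ + ε ^ p * μK)
          = (p - 1) * s * α * Jφ + (p - 1) * s * α * (ε ^ p * μK) := by ring
      rw [e1]
      linarith [hchain, hexp]
    have m1 : b / p * (Iv - ε ^ p * μK) ≤ b / p * Jφ :=
      mul_le_mul_of_nonneg_left stepF (by positivity)
    have hmulsub : b / p * (Iv - ε ^ p * μK) = b / p * Iv - b / p * (ε ^ p * μK) := by ring
    have hfin2 : b / p * Iv ≤ (b / p + (p - 1) * s * α) * (ε ^ p * μK)
        + α * s ^ (1 - p) * Igv := by
      have h3 := m1.trans m2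
      rw [hmulsub] at h3
      have hexp2 : (b / p + (p - 1) * s * α) * (ε ^ p * μK)
          = b / p * (ε ^ p * μK) + (p - 1) * s * α * (ε ^ p * μK) := by ring
      linarith
    rw [hsum2] at hfin2
    rw [hC2def]
    exact hfin2
  -- pass to the limit ε → 0
  have hfinal : b / p * Iv ≤ C2 * Igv := by
    have h' : ∀ δ : ℝ, 0 < δ → b / p * Iv - δ ≤ C2 * Igv := by
      intro δ hδ
      have hc : (0:ℝ) < b * (μK + 1) := by positivity
      have hdc : (0:ℝ) < δ / (b * (μK + 1)) := div_pos hδ hc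
      set ε : ℝ := (δ / (b * (μK + 1))) ^ (p⁻¹) with hεdef
      have hε : 0 < ε := Real.rpow_pos_of_pos hdc _
      have hεp : ε ^ p = δ / (b * (μK + 1)) := Real.rpow_inv_rpow hdc.le hp0.ne'
      have h1 := main ε hε
      have h2 : b * (ε ^ p * μK) ≤ δ := by
        rw [hεp]
        rw [div_eq_mul_inv]
        have hle : b * μK ≤ b * (μK + 1) := by nlinarith
        calc b * (δ * (b * (μK + 1))⁻¹ * μK) = δ * ((b * μK) * (b * (μK + 1))⁻¹) := by ring
          _ ≤ δ * ((b * (μK + 1)) * (b * (μK + 1))⁻¹) := by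
              apply mul_le_mul_of_nonneg_left _ hδ.le
              exact mul_le_mul_of_nonneg_right hle (inv_nonneg.2 hc.le)
          _ = δ := by rw [mul_inv_cancel₀ hc.ne', mul_one]
      linarith
    exact le_of_forall_sub_le h'
  -- final algebra
  have hbp : (0:ℝ) < b ^ p := Real.rpow_pos_of_pos hb _
  have hpp : (0:ℝ) < p ^ p := Real.rpow_pos_of_pos hp0 _
  have hαp : (0:ℝ) < α ^ p := Real.rpow_pos_of_pos hαpos _
  have hXα : a ^ (p * (q - 1)) = α ^ p := by
    rw [hαdef, mul_comm p (q - 1), Real.rpow_mul ha.le]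
  have eb : b ^ (1 - p) = b / b ^ p := by
    rw [eq_div_iff hbp.ne', ← Real.rpow_add hb, show (1:ℝ) - p + p = 1 by ring, Real.rpow_one]
  have ep : p ^ (1 - p) = p / p ^ p := by
    rw [eq_div_iff hpp.ne', ← Real.rpow_add hp0, show (1:ℝ) - p + p = 1 by ring, Real.rpow_one]
  have eα : α ^ (1 - p) = α / α ^ p := by
    rw [eq_div_iff hαp.ne', ← Real.rpow_add hαpos, show (1:ℝ) - p + p = 1 by ring, Real.rpow_one]
  have hsexp : s ^ (1 - p) = b ^ (1 - p) / (p ^ (1 - p) * α ^ (1 - p)) := by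
    rw [hsdef, Real.div_rpow hb.le (mul_pos hp0 hαpos).le,
      Real.mul_rpow hp0.le hαpos.le]
  have hid : C2 * (b ^ p / (p ^ p * a ^ (p * (q - 1)))) = b / p := by
    rw [hC2def, hXα, hsexp, eb, ep, eα]
    field_simp
  have hX : b ^ p / (p ^ p * a ^ (p * (q - 1))) = (b / p) / C2 := by
    rw [eq_div_iff hC2.ne', mul_comm, hid]
  rw [hX]
  rw [div_mul_eq_mul_div, div_le_iff₀ hC2]
  calc b / p * Iv ≤ C2 * Igv := hfinal
    _ = Igv * C2 := mul_comm _ _
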